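/- Let K be a number field with ring of integers Z_K, and let X be a set of positive integers such that the series ∑_{m ∈ X} 1/m diverges. Then the set A of principal ideals a·Z_K of Z_K, where a is an irreducible element (atom) of Z_K dividing some element m of X, is infinite. -/

import Mathlib

open NumberField

/-- A natural number `> 1` is not a unit in the ring of integers of a number field. -/
lemma aux_not_isUnit_natCast (K : Type*) [Field K] [NumberField K] {n : ℕ} (hn : 1 < n) :
    ¬ IsUnit (n : RingOfIntegers K) := by
  intro h
  obtain ⟨u, hu⟩ := h.exists_right_inv
  have hK : ((n : RingOfIntegers K) : K) * (u : K) = 1 := by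
    have := congrArg (algebraMap (RingOfIntegers K) K) hu
    push_cast at this ⊢
    exact_mod_cast this
  have hn0 : ((n : K)) ≠ 0 := by
    exact_mod_cast Nat.cast_ne_zero.mpr (by omega)
  have huK : (u : K) = algebraMap ℚ K ((n : ℚ)⁻¹) := by
    have : ((n : RingOfIntegers K) : K) = (n : K) := by push_cast; ring
    rw [this] at hK
    field_simp
    rw [mul_comm] at hK
    rw [map_div₀, map_one, map_natCast]; exact eq_div_of_mul_eq hn0 hK
  have hint : IsIntegral ℤ ((u : K)) := RingOfIntegers.isIntegral_coe u
  rw [huK] at hint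
  have hint' : IsIntegral ℤ ((n : ℚ)⁻¹) :=
    (isIntegral_algebraMap_iff ((algebraMap ℚ K).injective)).mp hint
  obtain ⟨y, hy⟩ := IsIntegrallyClosed.isIntegral_iff.mp hint'
  have hq : (y : ℚ) = (n : ℚ)⁻¹ := by exact_mod_cast hy
  have hn0' : ((n : ℚ)) ≠ 0 := Nat.cast_ne_zero.mpr (by omega)
  have : ((y * (n : ℤ) : ℤ) : ℚ) = 1 := by
    push_cast
    rw [hq]
    field_simp
  have hyn : y * (n : ℤ) = 1 := by exact_mod_cast this
  have : (n : ℤ) ≤ 1 := Int.le_of_dvd one_pos ⟨y, by linarith [hyn]⟩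
  omega

/-- The multiplicative function `n ↦ (n : ℝ)⁻¹`. -/
noncomputable def auxInv : ℕ →* ℝ where
  toFun n := (n : ℝ)⁻¹
  map_one' := by simp
  map_mul' m n := by push_cast; rw [mul_inv]

/-- Let `K` be a number field and `X` a set of positive integers with `∑_{m ∈ X} 1/m = ∞`.
Then the set of principal ideals of `Z_K` generated by an atom dividing some `m ∈ X`
is infinite. -/
theorem stmt1 (K : Type*) [Field K] [NumberField K]
    (X : Set ℕ) (hXpos : ∀ m ∈ X, 0 < m)
    (hX : ¬ Summable (fun m : X => (1 : ℝ) / (m : ℝ)))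
    (A : Set (Ideal (NumberField.RingOfIntegers K)))
    (hA : A = {I : Ideal (NumberField.RingOfIntegers K) |
      ∃ a : NumberField.RingOfIntegers K, Irreducible a ∧ I = Ideal.span {a} ∧
        ∃ m ∈ X, a ∣ (m : NumberField.RingOfIntegers K)}) :
    A.Infinite := by
  -- Step 1: the set of primes dividing some element of `X` is infinite.
  set P : Set ℕ := {p : ℕ | p.Prime ∧ ∃ m ∈ X, p ∣ m} with hP
  have hPinf : P.Infinite := by
    intro hPfin
    apply hX
    set s : Finset ℕ := hPfin.toFinset with hs
    have hXsub : X ⊆ Nat.factoredNumbers s := by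
      intro m hm
      refine ⟨(hXpos m hm).ne', fun p hp => ?_⟩
      have hp' : p.Prime := Nat.prime_of_mem_primeFactorsList hp
      have hpd : p ∣ m := Nat.dvd_of_mem_primeFactorsList hp
      exact hPfin.mem_toFinset.mpr ⟨hp', m, hm, hpd⟩
    have hnorm : ∀ {p : ℕ}, p.Prime → ‖auxInv p‖ < 1 := by
      intro p hp
      have h2 : (2 : ℝ) ≤ (p : ℝ) := by exact_mod_cast hp.two_le
      have : ‖auxInv p‖ = (p : ℝ)⁻¹ := by
        simp only [auxInv, MonoidHom.coe_mk, OneHom.coe_mk, Real.norm_eq_abs]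
        exact abs_of_nonneg (by positivity)
      rw [this]
      rw [inv_lt_one_iff₀]
      right; linarith
    have hsum := (EulerProduct.summable_and_hasSum_factoredNumbers_prod_filter_prime_geometric
      hnorm s).1
    have hsum' : Summable (fun m : Nat.factoredNumbers s => ‖auxInv m‖) := hsum
    have hsum'' : Summable ((Nat.factoredNumbers s).indicator fun m => ‖auxInv m‖) :=
      summable_subtype_iff_indicator.mp hsum'
    have hsum2 : Summable (Set.indicator X ((Nat.factoredNumbers s).indicator
        (fun m => ‖auxInv m‖))) := hsum''.indicator X
    rw [Set.indicator_indicator, Set.inter_eq_self_of_subset_left hXsub] at hsum2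
    have hsum3 : Summable ((fun m => ‖auxInv m‖) ∘ ((↑) : X → ℕ)) :=
      summable_subtype_iff_indicator.mpr hsum2
    refine hsum3.congr fun m => ?_
    simp only [Function.comp_apply]
    simp only [auxInv, MonoidHom.coe_mk, OneHom.coe_mk, Real.norm_eq_abs]
    rw [abs_of_nonneg (by positivity), one_div]
  -- Step 2: choose an irreducible factor of each prime in `P`.
  have hex : ∀ p ∈ P, ∃ a : RingOfIntegers K, Irreducible a ∧
      a ∣ (p : RingOfIntegers K) := by
    intro p hp
    obtain ⟨hprime, m, hm, hpm⟩ := hp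
    have h1 : ¬ IsUnit ((p : RingOfIntegers K)) := aux_not_isUnit_natCast K hprime.one_lt
    have h0 : ((p : RingOfIntegers K)) ≠ 0 := by
      exact_mod_cast Nat.cast_ne_zero.mpr hprime.ne_zero
    haveI : WfDvdMonoid (RingOfIntegers K) := IsNoetherianRing.wfDvdMonoid
    exact WfDvdMonoid.exists_irreducible_factor h1 h0
  choose a ha hadvd using hex
  -- Step 3: construct an injective map from `P` into `A`.
  have hmem : ∀ (p : ℕ) (hp : p ∈ P), Ideal.span {a p hp} ∈ A := by
    intro p hp
    obtain ⟨hprime, m, hm, hpm⟩ := hp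
    refine hA ▸ ⟨a p ⟨hprime, m, hm, hpm⟩, ha p _, rfl, m, hm, ?_⟩
    exact (hadvd p _).trans (Nat.cast_dvd_cast hpm)
  have hinj : ∀ (p : ℕ) (hp : p ∈ P) (q : ℕ) (hq : q ∈ P),
      Ideal.span {a p hp} = Ideal.span {a q hq} → p = q := by
    intro p hp q hq hspan
    by_contra hne
    have hcop : Nat.Coprime p q := (Nat.coprime_primes hp.1 hq.1).mpr hne
    have hic : IsCoprime ((p : ℤ)) ((q : ℤ)) := Int.isCoprime_iff_gcd_eq_one.mpr hcop
    have hic' : IsCoprime ((p : RingOfIntegers K)) ((q : RingOfIntegers K)) := by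
      have := hic.map (Int.castRingHom (RingOfIntegers K))
      simpa using this
    have hassoc : Associated (a p hp) (a q hq) := by
      rw [← Ideal.span_singleton_eq_span_singleton]
      exact hspan
    have hdq : a p hp ∣ (q : RingOfIntegers K) := hassoc.dvd.trans (hadvd q hq)
    exact (ha p hp).not_isUnit (hic'.isUnit_of_dvd' (hadvd p hp) hdq)
  -- Conclude.
  have : Infinite ↥P := Set.infinite_coe_iff.mpr hPinf
  exact Set.infinite_of_injective_forall_mem
    (f := fun p : ↥P => Ideal.span {a p.1 p.2})
    (fun p q hpq => Subtype.ext (hinj p.1 p.2 q.1 q.2 hpq))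
    (fun p => hmem p.1 p.2)
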